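/- Let T be a bounded linear operator on a complex Hilbert space H and φ an Orlicz function. Then φ(w(T)) ≤ (1/2)‖φ(|T|) + φ(|T*|)‖. -/

import Mathlib

open scoped InnerProductSpace
open Set Filter Polynomial

variable {H : Type*} [NormedAddCommGroup H] [InnerProductSpace ℂ H] [CompleteSpace H]

/-- The numerical radius of a bounded linear operator. -/
noncomputable def numRad (T : H →L[ℂ] H) : ℝ :=
  ⨆ x : {x : H // ‖x‖ = 1}, ‖(⟪T x, x⟫_ℂ)‖

/-- The absolute value `|T| = (T*T)^(1/2)` of a bounded linear operator. -/
noncomputable def opAbs (T : H →L[ℂ] H) : H →L[ℂ] H := CFC.sqrt (star T * T)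

set_option synthInstance.maxHeartbeats 1000000
set_option maxHeartbeats 1000000
set_option linter.unusedSectionVars false
set_option linter.unusedVariables false

namespace Aux15


lemma star_mul_self_nonneg' (T : H →L[ℂ] H) : (0 : H →L[ℂ] H) ≤ star T * T :=
  star_mul_self_nonneg T

lemma spec_S_nonneg {S : H →L[ℂ] H} (hS : 0 ≤ S) : spectrum ℝ S ⊆ Ici 0 :=
  fun s hs => spectrum_nonneg_of_nonneg hS hs

lemma sa_of_nonneg {S : H →L[ℂ] H} (hS : 0 ≤ S) : IsSelfAdjoint S :=
  IsSelfAdjoint.of_nonneg hS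

/-- opAbs as a unital cfc. -/
lemma opAbs_eq_cfc (T : H →L[ℂ] H) : opAbs T = cfc Real.sqrt (star T * T) := by
  have hS : (0 : H →L[ℂ] H) ≤ star T * T := star_mul_self_nonneg T
  refine CFC.sqrt_unique ?_ ?_
  · rw [← cfc_mul ..]
    have : (spectrum ℝ (star T * T)).EqOn (fun s => Real.sqrt s * Real.sqrt s) id := by
      intro s hs
      exact Real.mul_self_sqrt (spec_S_nonneg hS hs)
    rw [cfc_congr this, cfc_id ℝ _]
  · exact cfc_nonneg fun s _ => Real.sqrt_nonneg s

/-- order to inner products -/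
lemma inner_le_of_le {S D : H →L[ℂ] H} (h : S ≤ D) (x : H) :
    RCLike.re ⟪S x, x⟫_ℂ ≤ RCLike.re ⟪D x, x⟫_ℂ := by
  rw [ContinuousLinearMap.le_def] at h
  have := h.2 x
  simp only [ContinuousLinearMap.reApplyInnerSelf, ContinuousLinearMap.sub_apply,
    inner_sub_left, map_sub, RCLike.re_to_complex] at this ⊢
  linarith

lemma inner_nonneg_of_nonneg {S : H →L[ℂ] H} (h : 0 ≤ S) (x : H) :
    0 ≤ RCLike.re ⟪S x, x⟫_ℂ := by
  simpa using inner_le_of_le h x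

/-- ‖T z‖ = ‖|T| z‖ -/
lemma norm_opAbs_apply (T : H →L[ℂ] H) (z : H) : ‖opAbs T z‖ = ‖T z‖ := by
  have hS : (0 : H →L[ℂ] H) ≤ star T * T := star_mul_self_nonneg T
  have hA : IsSelfAdjoint (opAbs T) := sa_of_nonneg (CFC.sqrt_nonneg _)
  have hsq : opAbs T * opAbs T = star T * T := CFC.sqrt_mul_sqrt_self _ hS
  have h1 : (⟪opAbs T z, opAbs T z⟫_ℂ) = ⟪T z, T z⟫_ℂ := by
    calc ⟪opAbs T z, opAbs T z⟫_ℂ = ⟪(opAbs T * opAbs T) z, z⟫_ℂ := by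
          rw [ContinuousLinearMap.mul_apply]
          rw [← ContinuousLinearMap.adjoint_inner_left (opAbs T)]
          rw [← ContinuousLinearMap.star_eq_adjoint, hA.star_eq]
      _ = ⟪star T (T z), z⟫_ℂ := by rw [hsq]; rfl
      _ = ⟪T z, T z⟫_ℂ := by
          rw [ContinuousLinearMap.star_eq_adjoint, ContinuousLinearMap.adjoint_inner_left]
  have := congrArg Complex.re h1
  rw [inner_self_eq_norm_sq_to_K (𝕜 := ℂ)] at h1
  rw [inner_self_eq_norm_sq_to_K (𝕜 := ℂ)] at h1
  have h2 : (‖opAbs T z‖ : ℝ) ^ 2 = ‖T z‖ ^ 2 := by exact_mod_cast h1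
  nlinarith [norm_nonneg (opAbs T z), norm_nonneg (T z)]



lemma pow_comm' (T : H →L[ℂ] H) (n : ℕ) :
    T * (star T * T) ^ n = (T * star T) ^ n * T := by
  induction n with
  | zero => simp
  | succ n ih =>
    rw [pow_succ, ← mul_assoc, ih, pow_succ]
    noncomm_ring

lemma poly_comm (T : H →L[ℂ] H) (q : ℝ[X]) :
    T * (Polynomial.aeval (star T * T)) q = (Polynomial.aeval (T * star T)) q * T := by
  induction q using Polynomial.induction_on' with
  | add p q hp hq => simp [map_add, mul_add, add_mul, hp, hq]
  | monomial n c =>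
    simp only [Polynomial.aeval_monomial]
    calc T * (algebraMap ℝ _ c * (star T * T) ^ n)
        = algebraMap ℝ _ c * (T * (star T * T) ^ n) := by
          rw [← mul_assoc, ← Algebra.commutes c T, mul_assoc]
      _ = algebraMap ℝ _ c * ((T * star T) ^ n * T) := by rw [pow_comm' T n]
      _ = algebraMap ℝ _ c * (T * star T) ^ n * T := (mul_assoc _ _ _).symm

lemma intertwine [Nontrivial H] (T : H →L[ℂ] H) (f : ℝ → ℝ) (hf : ContinuousOn f (Ici 0)) :
    T * cfc f (star T * T) = cfc f (T * star T) * T := by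
  set S := star T * T with hSdef
  set S' := T * star T with hS'def
  have hS : (0 : H →L[ℂ] H) ≤ S := star_mul_self_nonneg T
  have hS' : (0 : H →L[ℂ] H) ≤ S' := mul_star_self_nonneg T
  set M : ℝ := max ‖S‖ ‖S'‖ with hM
  have hM0 : (0:ℝ) ≤ M := le_trans (norm_nonneg S) (le_max_left _ _)
  have hspecS : spectrum ℝ S ⊆ Icc 0 M := by
    intro s hs
    refine ⟨spectrum_nonneg_of_nonneg hS hs, ?_⟩
    have := spectrum.norm_le_norm_of_mem hs
    have h0 : 0 ≤ s := spectrum_nonneg_of_nonneg hS hs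
    rw [Real.norm_of_nonneg h0] at this
    exact this.trans (le_max_left _ _)
  have hspecS' : spectrum ℝ S' ⊆ Icc 0 M := by
    intro s hs
    refine ⟨spectrum_nonneg_of_nonneg hS' hs, ?_⟩
    have := spectrum.norm_le_norm_of_mem hs
    have h0 : 0 ≤ s := spectrum_nonneg_of_nonneg hS' hs
    rw [Real.norm_of_nonneg h0] at this
    exact this.trans (le_max_right _ _)
  have hfS : ContinuousOn f (spectrum ℝ S) := hf.mono (fun s hs => (hspecS hs).1)
  have hfS' : ContinuousOn f (spectrum ℝ S') := hf.mono (fun s hs => (hspecS' hs).1)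
  have hIcc : (Icc (0:ℝ) M) ⊆ Ici 0 := fun t ht => ht.1
  -- the continuous map on Icc 0 M
  set fc : C(Icc (0:ℝ) M, ℝ) := ⟨fun t => f t.1, hf.comp_continuous continuous_subtype_val
    (fun t => hIcc t.2)⟩ with hfc
  have key : ∀ ε > (0:ℝ), ‖T * cfc f S - cfc f S' * T‖ ≤ (2 * ‖T‖ + 1) * ε := by
    intro ε hε
    obtain ⟨p, hp⟩ := exists_polynomial_near_continuousMap 0 M fc ε hε
    have hpb : ∀ t ∈ Icc (0:ℝ) M, |f t - p.eval t| ≤ ε := by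
      intro t ht
      have := (p.toContinuousMapOn (Icc 0 M) - fc).norm_coe_le_norm ⟨t, ht⟩
      have h2 : ‖p.eval t - f t‖ ≤ ‖p.toContinuousMapOn (Icc 0 M) - fc‖ := this
      rw [abs_sub_comm]
      exact le_trans h2 hp.le
    have e1 : T * cfc f S - cfc f S' * T
        = T * (cfc f S - cfc p.eval S) + (cfc p.eval S' - cfc f S') * T := by
      have := poly_comm T p
      rw [← cfc_polynomial (R := ℝ) p S (IsSelfAdjoint.of_nonneg hS),
        ← cfc_polynomial (R := ℝ) p S' (IsSelfAdjoint.of_nonneg hS')] at this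
      rw [mul_sub, sub_mul, this]
      abel
    have n1 : ‖cfc f S - cfc p.eval S‖ ≤ ε := by
      rw [← cfc_sub f p.eval S hfS p.continuous_aeval.continuousOn]
      exact norm_cfc_le hε.le fun s hs => by
        simpa [Real.norm_eq_abs] using hpb s (hspecS hs)
    have n2 : ‖cfc p.eval S' - cfc f S'‖ ≤ ε := by
      rw [← cfc_sub p.eval f S' p.continuous_aeval.continuousOn hfS']
      exact norm_cfc_le hε.le fun s hs => by
        rw [Real.norm_eq_abs, abs_sub_comm]
        exact hpb s (hspecS' hs)
    calc ‖T * cfc f S - cfc f S' * T‖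
        ≤ ‖T * (cfc f S - cfc p.eval S)‖ + ‖(cfc p.eval S' - cfc f S') * T‖ := by
          rw [e1]; exact norm_add_le _ _
      _ ≤ ‖T‖ * ε + ε * ‖T‖ :=
          add_le_add ((norm_mul_le _ _).trans (mul_le_mul_of_nonneg_left n1 (norm_nonneg T)))
            ((norm_mul_le _ _).trans (mul_le_mul_of_nonneg_right n2 (norm_nonneg T)))
      _ ≤ (2 * ‖T‖ + 1) * ε := by nlinarith [norm_nonneg T]
  have : ‖T * cfc f S - cfc f S' * T‖ ≤ 0 := by
    refine le_of_forall_pos_le_add ?_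
    intro ε hε
    have hd : (0:ℝ) < 2 * ‖T‖ + 1 := by positivity
    have := key (ε / (2 * ‖T‖ + 1)) (by positivity)
    rw [mul_div_cancel₀ _ (ne_of_gt hd)] at this
    linarith
  have := le_antisymm this (norm_nonneg _)
  rwa [norm_eq_zero, sub_eq_zero] at this



/-- supporting line for a monotone convex function on [0,∞) -/
lemma supporting_line {φ : ℝ → ℝ} (hφconv : ConvexOn ℝ (Ici 0) φ)
    (hφmono : MonotoneOn φ (Ici 0)) {t₀ : ℝ} (ht₀ : 0 ≤ t₀) :
    ∃ a b : ℝ, a * t₀ + b = φ t₀ ∧ ∀ t ∈ Ici (0:ℝ), a * t + b ≤ φ t := by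
  set sl : Set ℝ := (fun u => (φ u - φ t₀) / (u - t₀)) '' Ioi t₀ with hsl
  have hne : sl.Nonempty := ⟨_, ⟨t₀ + 1, by simp, rfl⟩⟩
  have hbdd : ∀ y ∈ sl, 0 ≤ y := by
    rintro y ⟨u, hu, rfl⟩
    have h1 : t₀ < u := hu
    have h2 : φ t₀ ≤ φ u := hφmono ht₀ (le_trans ht₀ h1.le) h1.le
    exact div_nonneg (by linarith) (by linarith)
  set a : ℝ := sInf sl with ha
  have hbdd' : BddBelow sl := ⟨0, fun y hy => hbdd y hy⟩
  refine ⟨a, φ t₀ - a * t₀, by ring, ?_⟩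
  intro t ht
  rcases lt_trichotomy t t₀ with h | h | h
  · -- t < t₀ : slope(t,t₀) ≤ every slope(t₀,u)
    have hs : (φ t₀ - φ t) / (t₀ - t) ≤ a := by
      refine le_csInf hne ?_
      rintro y ⟨u, hu, rfl⟩
      have := hφconv.slope_mono_adjacent ht (le_trans ht₀ (le_of_lt hu)) h hu
      simpa using this
    have hpos : (0:ℝ) < t₀ - t := by linarith
    rw [div_le_iff₀ hpos] at hs
    nlinarith
  · subst h; simp
  · -- t > t₀
    have hmem : (φ t - φ t₀) / (t - t₀) ∈ sl := ⟨t, h, rfl⟩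
    have hs : a ≤ (φ t - φ t₀) / (t - t₀) := csInf_le hbdd' hmem
    have hpos : (0:ℝ) < t - t₀ := by linarith
    rw [le_div_iff₀ hpos] at hs
    nlinarith

/-- Operator Jensen inequality via supporting line. -/
lemma jensen {φ : ℝ → ℝ} (hφc : ContinuousOn φ (Ici 0)) (hφconv : ConvexOn ℝ (Ici 0) φ)
    (hφmono : MonotoneOn φ (Ici 0)) (C : H →L[ℂ] H) (hC : 0 ≤ C) (x : H) (hx : ‖x‖ = 1) :
    φ (RCLike.re ⟪C x, x⟫_ℂ) ≤ RCLike.re ⟪cfc φ C x, x⟫_ℂ := by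
  have hspec : spectrum ℝ C ⊆ Ici 0 := fun s hs => spectrum_nonneg_of_nonneg hC hs
  have ht₀ : 0 ≤ RCLike.re ⟪C x, x⟫_ℂ := by
    simpa using inner_le_of_le hC x
  set t₀ : ℝ := RCLike.re ⟪C x, x⟫_ℂ with ht₀def
  obtain ⟨a, b, heq, hle⟩ := supporting_line hφconv hφmono ht₀
  -- operator inequality
  have hcfc_le : cfc (fun t => a * t + b) C ≤ cfc φ C := by
    exact cfc_mono (fun s hs => hle s (hspec hs))
      ((continuous_const.mul continuous_id).add continuous_const).continuousOn
      (hφc.mono hspec)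
  have hCsa : IsSelfAdjoint C := IsSelfAdjoint.of_nonneg hC
  have hc1 : ContinuousOn (fun t : ℝ => a * t) (spectrum ℝ C) :=
    ((continuous_const.mul continuous_id).continuousOn)
  have hc2 : ContinuousOn (fun _ : ℝ => b) (spectrum ℝ C) := continuousOn_const
  have hcalc : cfc (fun t => a * t + b) C = a • C + algebraMap ℝ (H →L[ℂ] H) b := by
    rw [cfc_add (a := C) (fun t => a * t) (fun _ => b) hc1 hc2,
      cfc_const_mul_id a C hCsa, cfc_const b C hCsa]
  have hinner : RCLike.re ⟪(a • C + algebraMap ℝ (H →L[ℂ] H) b) x, x⟫_ℂ = a * t₀ + b := by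
    rw [ContinuousLinearMap.add_apply, inner_add_left, map_add]
    congr 1
    · have h1 : (a • C) x = ((a:ℂ)) • (C x) := by
        rw [ContinuousLinearMap.smul_apply, RCLike.real_smul_eq_coe_smul (K := ℂ)]
        rfl
      rw [h1, inner_smul_left]
      simp [ht₀def]
    · rw [Algebra.algebraMap_eq_smul_one]
      have h1 : ((b • (1:H →L[ℂ] H))) x = ((b:ℂ)) • x := by
        rw [ContinuousLinearMap.smul_apply, RCLike.real_smul_eq_coe_smul (K := ℂ)]
        rfl
      rw [h1, inner_smul_left]
      have h2 : (⟪x, x⟫_ℂ) = (‖x‖:ℂ) ^ 2 := inner_self_eq_norm_sq_to_K x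
      rw [h2, hx]
      simp
  calc φ t₀ = a * t₀ + b := heq.symm
    _ = RCLike.re ⟪(a • C + algebraMap ℝ (H →L[ℂ] H) b) x, x⟫_ℂ := hinner.symm
    _ = RCLike.re ⟪cfc (fun t => a * t + b) C x, x⟫_ℂ := by rw [hcalc]
    _ ≤ RCLike.re ⟪cfc φ C x, x⟫_ℂ := inner_le_of_le hcfc_le x


noncomputable def q4 : ℝ → ℝ := fun s => Real.sqrt (Real.sqrt s)
noncomputable def uf (δ : ℝ) : ℝ → ℝ := fun s => Real.sqrt s / (s + δ)
noncomputable def rf (δ : ℝ) : ℝ → ℝ := fun s => (s + δ)⁻¹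
lemma norm_sq_eq_inner_sa {B : H →L[ℂ] H} (hB : IsSelfAdjoint B) (y : H) :
    ‖B y‖ ^ 2 = RCLike.re ⟪(B * B) y, y⟫_ℂ := by
  have hadj : ContinuousLinearMap.adjoint B = B := by
    rw [← ContinuousLinearMap.star_eq_adjoint, hB.star_eq]
  have h1 : (⟪(B * B) y, y⟫_ℂ) = ⟪B y, B y⟫_ℂ := by
    calc (⟪(B * B) y, y⟫_ℂ) = ⟪(ContinuousLinearMap.adjoint B) (B y), y⟫_ℂ := by rw [hadj]; rfl
      _ = ⟪B y, B y⟫_ℂ := ContinuousLinearMap.adjoint_inner_left B y (B y)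
  rw [h1, inner_self_eq_norm_sq (𝕜 := ℂ)]

lemma keyIneq [Nontrivial H] (T : H →L[ℂ] H) (x : H) (hx : ‖x‖ = 1) :
    ‖(⟪T x, x⟫_ℂ)‖ ≤
      (RCLike.re ⟪opAbs T x, x⟫_ℂ + RCLike.re ⟪opAbs (star T) x, x⟫_ℂ) / 2 := by
  set S : H →L[ℂ] H := star T * T with hSdef
  set S' : H →L[ℂ] H := T * star T with hS'def
  have hS : (0:H →L[ℂ] H) ≤ S := star_mul_self_nonneg T
  have hS' : (0:H →L[ℂ] H) ≤ S' := mul_star_self_nonneg T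
  have hSsa : IsSelfAdjoint S := IsSelfAdjoint.of_nonneg hS
  have hS'sa : IsSelfAdjoint S' := IsSelfAdjoint.of_nonneg hS'
  have hspecS : spectrum ℝ S ⊆ Ici 0 := spec_S_nonneg hS
  have hspecS' : spectrum ℝ S' ⊆ Ici 0 := spec_S_nonneg hS'
  have hA : opAbs T = cfc Real.sqrt S := opAbs_eq_cfc T
  have hA' : opAbs (star T) = cfc Real.sqrt S' := by
    have := opAbs_eq_cfc (star T); rwa [star_star] at this
  set a : ℝ := RCLike.re ⟪opAbs T x, x⟫_ℂ with hadef
  set c : ℝ := RCLike.re ⟪opAbs (star T) x, x⟫_ℂ with hcdef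
  have main : ∀ δ : ℝ, 0 < δ → ‖(⟪T x, x⟫_ℂ)‖ ≤ (a + c) / 2 + Real.sqrt δ / 2 := by
    intro δ hδ
    have hsd : 0 < Real.sqrt δ := Real.sqrt_pos.mpr hδ
    have hne : ∀ s ∈ Ici (0:ℝ), s + δ ≠ 0 := fun s hs => by
      have h0 : (0:ℝ) ≤ s := hs; positivity
    have hcsq : ContinuousOn Real.sqrt (Ici 0) := Real.continuous_sqrt.continuousOn
    have hcq : ContinuousOn q4 (Ici 0) :=
      (Real.continuous_sqrt.comp Real.continuous_sqrt).continuousOn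
    have hcu : ContinuousOn (uf δ) (Ici 0) :=
      ContinuousOn.div Real.continuous_sqrt.continuousOn
        (Continuous.continuousOn (by continuity)) hne
    have hcrr : ContinuousOn (rf δ) (Ici 0) :=
      ContinuousOn.inv₀ (Continuous.continuousOn (by continuity)) hne
    have hcsqS := hcsq.mono hspecS
    have hcqS := hcq.mono hspecS
    have hcuS := hcu.mono hspecS
    have hcrrS := hcrr.mono hspecS
    set B : H →L[ℂ] H := cfc q4 S with hBdef
    set V : H →L[ℂ] H := T * cfc (uf δ) S with hVdef
    set E : H →L[ℂ] H := T * cfc (rf δ) S with hEdef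
    have hBB : B * B = cfc Real.sqrt S := by
      rw [hBdef, ← cfc_mul q4 q4 S hcqS hcqS]
      exact cfc_congr fun s _ => Real.mul_self_sqrt (Real.sqrt_nonneg _)
    have hBsa : IsSelfAdjoint B :=
      IsSelfAdjoint.of_nonneg (cfc_nonneg fun s _ => Real.sqrt_nonneg _)
    have hUsa : IsSelfAdjoint (cfc (uf δ) S) := by
      refine IsSelfAdjoint.of_nonneg (cfc_nonneg fun s hs => ?_)
      have h0 : (0:ℝ) ≤ s := hspecS hs
      exact div_nonneg (Real.sqrt_nonneg _) (by positivity)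
    -- the decomposition T = V ∘ |T| + δ correction
    have e1 : V * (B * B) = T * cfc (fun s => uf δ s * Real.sqrt s) S := by
      rw [hBB, hVdef, mul_assoc, ← cfc_mul (uf δ) Real.sqrt S hcuS hcsqS]
    have e2 : δ • E = T * cfc (fun s => δ • rf δ s) S := by
      rw [hEdef, cfc_smul δ (rf δ) S hcrrS, mul_smul_comm]
    have hdecomp : V * (B * B) + δ • E = T := by
      rw [e1, e2, ← mul_add,
        ← cfc_add (a := S) (fun s => uf δ s * Real.sqrt s) (fun s => δ • rf δ s)
          (hcuS.mul hcsqS) (hcrrS.const_smul δ)]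
      have hcongr : (spectrum ℝ S).EqOn
          (fun s => uf δ s * Real.sqrt s + δ • rf δ s) (fun _ => (1:ℝ)) := by
        intro s hs
        have h0 : (0:ℝ) ≤ s := hspecS hs
        have hd : s + δ ≠ 0 := by positivity
        have hss : Real.sqrt s * Real.sqrt s = s := Real.mul_self_sqrt h0
        simp only [uf, rf, smul_eq_mul]
        field_simp
        linear_combination hss
      rw [cfc_congr hcongr, cfc_const 1 S hSsa, map_one, mul_one]
    -- bound on the correction term
    have hExn : ‖E x‖ ≤ 1 / (2 * Real.sqrt δ) := by
      have hbound : ∀ s ∈ spectrum ℝ S,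
          ‖Real.sqrt s * rf δ s‖ ≤ 1 / (2 * Real.sqrt δ) := by
        intro s hs
        have h0 : (0:ℝ) ≤ s := hspecS hs
        have hd : (0:ℝ) < s + δ := by positivity
        have hnn : (0:ℝ) ≤ Real.sqrt s * (s + δ)⁻¹ := by positivity
        have key : Real.sqrt s * (2 * Real.sqrt δ) ≤ s + δ := by
          nlinarith [sq_nonneg (Real.sqrt s - Real.sqrt δ), Real.sq_sqrt h0,
            Real.sq_sqrt hδ.le, Real.sqrt_nonneg s, Real.sqrt_nonneg δ]
        simp only [rf]
        rw [Real.norm_eq_abs, abs_of_nonneg hnn, ← div_eq_mul_inv,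
          div_le_div_iff₀ hd (by positivity)]
        linarith
      have e5 : E x = T (cfc (rf δ) S x) := rfl
      have e6 : ‖T (cfc (rf δ) S x)‖ = ‖opAbs T (cfc (rf δ) S x)‖ :=
        (norm_opAbs_apply T _).symm
      have e7 : opAbs T (cfc (rf δ) S x)
          = (cfc (fun s => Real.sqrt s * rf δ s) S) x := by
        rw [hA, cfc_mul Real.sqrt (rf δ) S hcsqS hcrrS]; rfl
      calc ‖E x‖ = ‖(cfc (fun s => Real.sqrt s * rf δ s) S) x‖ := by rw [e5, e6, e7]
        _ ≤ ‖cfc (fun s => Real.sqrt s * rf δ s) S‖ * ‖x‖ :=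
            ContinuousLinearMap.le_opNorm _ x
        _ ≤ (1 / (2 * Real.sqrt δ)) * 1 := by
            rw [hx]
            exact mul_le_mul_of_nonneg_right
              (norm_cfc_le (by positivity) hbound) zero_le_one
        _ = 1 / (2 * Real.sqrt δ) := mul_one _
    -- main term
    set P : H →L[ℂ] H := V * (B * B) with hPdef
    set Vs : H →L[ℂ] H := cfc (uf δ) S * star T with hVsdef
    have hVs : star V = Vs := by
      rw [hVdef, star_mul, hUsa.star_eq, hVsdef]
    have hstar : ContinuousLinearMap.adjoint (V * B) = B * Vs := by
      rw [← ContinuousLinearMap.star_eq_adjoint, star_mul, hBsa.star_eq, hVs]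
    have hinner1 : (⟪P x, x⟫_ℂ) = ⟪B x, (ContinuousLinearMap.adjoint (V * B)) x⟫_ℂ :=
      (ContinuousLinearMap.adjoint_inner_right (V * B) (B x) x).symm
    have hn1 : ‖(⟪P x, x⟫_ℂ)‖ ≤ ‖B x‖ * ‖(ContinuousLinearMap.adjoint (V * B)) x‖ := by
      rw [hinner1]; exact norm_inner_le_norm _ _
    have hBx2 : ‖B x‖ ^ 2 = a := by
      rw [norm_sq_eq_inner_sa hBsa x, hBB, ← hA]
    -- the conjugated operator
    set w : ℝ → ℝ := fun s => uf δ s * (Real.sqrt s * uf δ s) with hwdef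
    have hwc : ContinuousOn w (Ici 0) := hcu.mul (hcsq.mul hcu)
    have hc1 : cfc w S = cfc (uf δ) S * (cfc Real.sqrt S * cfc (uf δ) S) := by
      rw [hwdef, cfc_mul (uf δ) (fun s => Real.sqrt s * uf δ s) S hcuS (hcsqS.mul hcuS),
        cfc_mul Real.sqrt (uf δ) S hcsqS hcuS]
    have h2 : cfc (fun s => w s * s) S' = cfc w S' * S' := by
      rw [cfc_mul w (fun s : ℝ => s) S' (hwc.mono hspecS') continuousOn_id,
        cfc_id' ℝ S' hS'sa]
    have hWeq : V * (B * B) * Vs = cfc (fun s => w s * s) S' := by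
      calc V * (B * B) * Vs
          = T * (cfc (uf δ) S * (cfc Real.sqrt S * cfc (uf δ) S)) * star T := by
            rw [hBB, hVdef, hVsdef]; noncomm_ring
        _ = T * cfc w S * star T := by rw [← hc1]
        _ = cfc w S' * T * star T := by rw [intertwine T w hwc]
        _ = cfc w S' * S' := by rw [mul_assoc, ← hS'def]
        _ = cfc (fun s => w s * s) S' := h2.symm
    have hWle : cfc (fun s => w s * s) S' ≤ cfc Real.sqrt S' := by
      refine cfc_mono (fun s hs => ?_) ((hwc.mono hspecS').mul continuousOn_id)
        (hcsq.mono hspecS')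
      have h0 : (0:ℝ) ≤ s := hspecS' hs
      have hd : (0:ℝ) < s + δ := by positivity
      have hss : Real.sqrt s * Real.sqrt s = s := Real.mul_self_sqrt h0
      have hsn : (0:ℝ) ≤ Real.sqrt s := Real.sqrt_nonneg s
      simp only [hwdef, uf]
      have heq : Real.sqrt s / (s + δ) * (Real.sqrt s * (Real.sqrt s / (s + δ))) * s
          = (Real.sqrt s * s * s) / ((s + δ) * (s + δ)) := by
        field_simp
        linear_combination (Real.sqrt s * s) * hss
      rw [heq, div_le_iff₀ (by positivity)]
      have hs2 : s * s ≤ (s + δ) * (s + δ) := by nlinarith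
      calc Real.sqrt s * s * s = Real.sqrt s * (s * s) := by ring
        _ ≤ Real.sqrt s * ((s + δ) * (s + δ)) := mul_le_mul_of_nonneg_left hs2 hsn
    have hq2 : ‖(ContinuousLinearMap.adjoint (V * B)) x‖ ^ 2
        = RCLike.re ⟪(V * (B * B) * Vs) x, x⟫_ℂ := by
      have hBy : (ContinuousLinearMap.adjoint (V * B)) x = B (Vs x) := by
        rw [hstar]; rfl
      rw [hBy, norm_sq_eq_inner_sa hBsa (Vs x)]
      congr 1
      have hadjV : ContinuousLinearMap.adjoint V = Vs := by
        rw [← ContinuousLinearMap.star_eq_adjoint, hVs]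
      calc (⟪(B * B) (Vs x), Vs x⟫_ℂ)
          = ⟪(B * B) (Vs x), (ContinuousLinearMap.adjoint V) x⟫_ℂ := by rw [hadjV]
        _ = ⟪V ((B * B) (Vs x)), x⟫_ℂ :=
            ContinuousLinearMap.adjoint_inner_right V ((B * B) (Vs x)) x
        _ = ⟪(V * (B * B) * Vs) x, x⟫_ℂ := rfl
    have hq2le : ‖(ContinuousLinearMap.adjoint (V * B)) x‖ ^ 2 ≤ c := by
      rw [hq2, hWeq]
      have := inner_le_of_le hWle x
      rwa [← hA'] at this
    have hPn : ‖(⟪P x, x⟫_ℂ)‖ ≤ (a + c) / 2 := by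
      nlinarith [hn1, hBx2, hq2le, norm_nonneg (B x),
        norm_nonneg ((ContinuousLinearMap.adjoint (V * B)) x),
        sq_nonneg (‖B x‖ - ‖(ContinuousLinearMap.adjoint (V * B)) x‖)]
    -- split and conclude
    have hsplit : (⟪T x, x⟫_ℂ) = ⟪P x, x⟫_ℂ + (δ:ℂ) * ⟪E x, x⟫_ℂ := by
      conv_lhs => rw [← hdecomp]
      rw [ContinuousLinearMap.add_apply, inner_add_left]
      congr 1
      rw [ContinuousLinearMap.smul_apply, RCLike.real_smul_eq_coe_smul (K := ℂ),
        inner_smul_left, RCLike.conj_ofReal]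
      rfl
    have hEin : ‖(⟪E x, x⟫_ℂ)‖ ≤ 1 / (2 * Real.sqrt δ) := by
      calc ‖(⟪E x, x⟫_ℂ)‖ ≤ ‖E x‖ * ‖x‖ := norm_inner_le_norm _ _
        _ = ‖E x‖ := by rw [hx, mul_one]
        _ ≤ 1 / (2 * Real.sqrt δ) := hExn
    calc ‖(⟪T x, x⟫_ℂ)‖ ≤ ‖(⟪P x, x⟫_ℂ)‖ + ‖(δ:ℂ) * ⟪E x, x⟫_ℂ‖ := by
          rw [hsplit]; exact norm_add_le _ _
      _ = ‖(⟪P x, x⟫_ℂ)‖ + δ * ‖(⟪E x, x⟫_ℂ)‖ := by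
          rw [norm_mul, Complex.norm_real, Real.norm_of_nonneg hδ.le]
      _ ≤ (a + c) / 2 + δ * (1 / (2 * Real.sqrt δ)) := by
          exact add_le_add hPn (mul_le_mul_of_nonneg_left hEin hδ.le)
      _ = (a + c) / 2 + Real.sqrt δ / 2 := by
          have hδs : Real.sqrt δ * Real.sqrt δ = δ := Real.mul_self_sqrt hδ.le
          field_simp
          linear_combination (-1 : ℝ) * hδs
  refine le_of_forall_pos_le_add fun ε hε => ?_
  have := main (ε ^ 2) (by positivity)
  rw [Real.sqrt_sq hε.le] at this
  linarith


end Aux15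
theorem stmt15 (T : H →L[ℂ] H)
    (φ : ℝ → ℝ) (hφc : ContinuousOn φ (Ici 0)) (hφconv : ConvexOn ℝ (Ici 0) φ)
    (hφmono : MonotoneOn φ (Ici 0)) (hφ0 : φ 0 = 0) (hφpos : ∀ t > 0, 0 < φ t)
    (hφtop : Tendsto φ atTop atTop) :
    φ (numRad T) ≤ (1 / 2) * ‖cfc φ (opAbs T) + cfc φ (opAbs (star T))‖ := by
  classical
  unfold numRad
  set C : ℝ := (1 / 2) * ‖cfc φ (opAbs T) + cfc φ (opAbs (star T))‖ with hCdef
  have hC0 : (0:ℝ) ≤ C := by rw [hCdef]; positivity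
  rcases subsingleton_or_nontrivial H with hsub | hnt
  · -- trivial Hilbert space: no unit vectors
    have hemp : IsEmpty {x : H // ‖x‖ = 1} := by
      constructor
      rintro ⟨x, hx⟩
      have hx0 : x = 0 := Subsingleton.elim x 0
      rw [hx0, norm_zero] at hx
      exact one_ne_zero hx.symm
    rw [Real.iSup_of_isEmpty, hφ0]
    exact hC0
  · -- key pointwise bound
    have hAnn : (0:H →L[ℂ] H) ≤ opAbs T := CFC.sqrt_nonneg _
    have hA'nn : (0:H →L[ℂ] H) ≤ opAbs (star T) := CFC.sqrt_nonneg _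
    have key : ∀ x : {x : H // ‖x‖ = 1}, φ ‖(⟪T x.1, x.1⟫_ℂ)‖ ≤ C := by
      rintro ⟨x, hx⟩
      set a : ℝ := RCLike.re ⟪opAbs T x, x⟫_ℂ with hadef
      set c : ℝ := RCLike.re ⟪opAbs (star T) x, x⟫_ℂ with hcdef
      have ha0 : 0 ≤ a := Aux15.inner_nonneg_of_nonneg hAnn x
      have hc0 : 0 ≤ c := Aux15.inner_nonneg_of_nonneg hA'nn x
      have h1 : ‖(⟪T x, x⟫_ℂ)‖ ≤ (a + c) / 2 := Aux15.keyIneq T x hx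
      have h2 : φ ‖(⟪T x, x⟫_ℂ)‖ ≤ φ ((a + c) / 2) :=
        hφmono (norm_nonneg _) (by positivity : (0:ℝ) ≤ (a+c)/2) h1
      have h3 : φ ((a + c) / 2) ≤ (φ a + φ c) / 2 := by
        have := hφconv.2 (mem_Ici.mpr ha0) (mem_Ici.mpr hc0)
          (by norm_num : (0:ℝ) ≤ 1/2) (by norm_num : (0:ℝ) ≤ 1/2) (by norm_num)
        simp only [smul_eq_mul] at this
        calc φ ((a + c) / 2) = φ (1/2 * a + 1/2 * c) := by ring_nf
          _ ≤ 1/2 * φ a + 1/2 * φ c := this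
          _ = (φ a + φ c) / 2 := by ring
      have h4 : φ a ≤ RCLike.re ⟪cfc φ (opAbs T) x, x⟫_ℂ :=
        Aux15.jensen hφc hφconv hφmono (opAbs T) hAnn x hx
      have h5 : φ c ≤ RCLike.re ⟪cfc φ (opAbs (star T)) x, x⟫_ℂ :=
        Aux15.jensen hφc hφconv hφmono (opAbs (star T)) hA'nn x hx
      have h6 : RCLike.re ⟪cfc φ (opAbs T) x, x⟫_ℂ
            + RCLike.re ⟪cfc φ (opAbs (star T)) x, x⟫_ℂ
          = RCLike.re ⟪(cfc φ (opAbs T) + cfc φ (opAbs (star T))) x, x⟫_ℂ := by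
        rw [ContinuousLinearMap.add_apply, inner_add_left, map_add]
      have h7 : RCLike.re ⟪(cfc φ (opAbs T) + cfc φ (opAbs (star T))) x, x⟫_ℂ
          ≤ ‖cfc φ (opAbs T) + cfc φ (opAbs (star T))‖ := by
        set D := cfc φ (opAbs T) + cfc φ (opAbs (star T))
        calc RCLike.re ⟪D x, x⟫_ℂ ≤ ‖(⟪D x, x⟫_ℂ)‖ := RCLike.re_le_norm _
          _ ≤ ‖D x‖ * ‖x‖ := norm_inner_le_norm _ _
          _ ≤ (‖D‖ * ‖x‖) * ‖x‖ := by
              gcongr; exact ContinuousLinearMap.le_opNorm D x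
          _ = ‖D‖ := by rw [hx]; ring
      rw [hCdef]
      linarith
    -- pass to the supremum
    rcases isEmpty_or_nonempty {x : H // ‖x‖ = 1} with hemp | hne
    · rw [Real.iSup_of_isEmpty, hφ0]
      exact hC0
    · by_cases hbdd : BddAbove (Set.range fun x : {x : H // ‖x‖ = 1} => ‖(⟪T x.1, x.1⟫_ℂ)‖)
      · obtain ⟨x0⟩ := hne
        haveI : Nonempty {x : H // ‖x‖ = 1} := ⟨x0⟩
        have hr0 : 0 ≤ (⨆ x : {x : H // ‖x‖ = 1}, ‖(⟪T x.1, x.1⟫_ℂ)‖) :=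
          le_trans (norm_nonneg _) (le_ciSup hbdd x0)
        rcases eq_or_lt_of_le hr0 with h0 | hpos
        · rw [← h0, hφ0]; exact hC0
        · have hlt : ∀ t ∈ Ico (0:ℝ) ((⨆ x : {x : H // ‖x‖ = 1}, ‖(⟪T x.1, x.1⟫_ℂ)‖)), φ t ≤ C := by
            rintro t ⟨ht0, htr⟩
            obtain ⟨x, hxt⟩ := exists_lt_of_lt_ciSup htr
            exact le_trans (hφmono ht0 (norm_nonneg _) hxt.le) (key x)
          have hcw : ContinuousWithinAt φ (Ico 0 ((⨆ x : {x : H // ‖x‖ = 1}, ‖(⟪T x.1, x.1⟫_ℂ)‖))) ((⨆ x : {x : H // ‖x‖ = 1}, ‖(⟪T x.1, x.1⟫_ℂ)‖)) :=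
            ((hφc ((⨆ x : {x : H // ‖x‖ = 1}, ‖(⟪T x.1, x.1⟫_ℂ)‖)) (le_of_lt hpos)).mono Ico_subset_Ici_self)
          have hnb : (nhdsWithin ((⨆ x : {x : H // ‖x‖ = 1}, ‖(⟪T x.1, x.1⟫_ℂ)‖)) (Ico (0:ℝ) ((⨆ x : {x : H // ‖x‖ = 1}, ‖(⟪T x.1, x.1⟫_ℂ)‖)))).NeBot := by
            refine mem_closure_iff_nhdsWithin_neBot.mp ?_
            rw [closure_Ico (ne_of_lt hpos)]
            exact ⟨hr0, le_refl _⟩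
          exact le_of_tendsto hcw
            (eventually_nhdsWithin_of_forall fun t ht => hlt t ht)
      · rw [Real.iSup_of_not_bddAbove hbdd, hφ0]
        exact hC0
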